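/- Converse computation for the global secrecy capacity–memory tradeoff with small total cache budget when δ_z > δ_s (Proposition, eq. (60)): Let K_w, K_s be positive integers, K = K_w + K_s, and δ_s, δ_w, δ_z reals with 0 ≤ δ_s ≤ δ_w ≤ 1 and δ_s < δ_z ≤ 1. Set x := (δ_z − δ_w)⁺, R⁰ := (δ_z − δ_s)·x/(K_w(δ_z − δ_s) + K_s·x), and M¹ := (δ_z − δ_s)·min{1 − δ_z, 1 − δ_w}/(K_s(1 − δ_w) + K_w(δ_z − δ_s)). Then for every real M with 0 ≤ M ≤ K_w·M¹ one has sup_{β ∈ [0,1]} min{ (β·x + M)/K_w , (β·x + (1 − β)(δ_z − δ_s) + M)/K } = R⁰ + (δ_z − δ_s)·M/(K_w(δ_z − δ_s) + K_s·x). -/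

import Mathlib

set_option maxHeartbeats 1000000


/-- Converse computation for the global secrecy capacity–memory tradeoff with small
total cache budget when δ_z > δ_s (Proposition, eq. (60)). -/
theorem stmt_3 (Kw Ks K : ℕ) (hKw : 0 < Kw) (hKs : 0 < Ks) (hK : K = Kw + Ks)
    (δs δw δz : ℝ) (hs0 : 0 ≤ δs) (hsw : δs ≤ δw) (hw1 : δw ≤ 1)
    (hsz : δs < δz) (hz1 : δz ≤ 1)
    (x R0 M1 : ℝ)
    (hx : x = max (δz - δw) 0)
    (hR0 : R0 = (δz - δs) * x / (Kw * (δz - δs) + Ks * x))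
    (hM1 : M1 = (δz - δs) * min (1 - δz) (1 - δw) / (Ks * (1 - δw) + Kw * (δz - δs)))
    (M : ℝ) (hM0 : 0 ≤ M) (hMle : M ≤ Kw * M1) :
    sSup ((fun β : ℝ => min ((β * x + M) / Kw)
        ((β * x + (1 - β) * (δz - δs) + M) / K)) '' Set.Icc 0 1)
      = R0 + (δz - δs) * M / (Kw * (δz - δs) + Ks * x) := by
  have hKw' : (0:ℝ) < Kw := by exact_mod_cast hKw
  have hKs' : (0:ℝ) < Ks := by exact_mod_cast hKs
  have hKcast : (K:ℝ) = Kw + Ks := by exact_mod_cast congrArg (Nat.cast (R := ℝ)) hK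
  have hK' : (0:ℝ) < K := by rw [hKcast]; linarith
  set a : ℝ := δz - δs with ha_def
  have ha : 0 < a := by simp only [ha_def]; linarith
  have hx0 : 0 ≤ x := by rw [hx]; exact le_max_right _ _
  have hxa : x ≤ a := by
    rw [hx]; apply max_le
    · simp only [ha_def]; linarith
    · linarith
  set D : ℝ := Kw * a + Ks * x with hD_def
  have hD : 0 < D := by
    have : 0 ≤ (Ks:ℝ) * x := mul_nonneg hKs'.le hx0
    have : 0 < (Kw:ℝ) * a := mul_pos hKw' ha
    simp only [hD_def]; linarith
  -- bound on M : Ks * M ≤ Kw * a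
  have hm0 : 0 ≤ min (1 - δz) (1 - δw) := le_min (by linarith) (by linarith)
  have hm1 : min (1 - δz) (1 - δw) ≤ 1 - δw := min_le_right _ _
  have hD2 : 0 < (Ks:ℝ) * (1 - δw) + Kw * a := by
    have h1 : 0 ≤ (Ks:ℝ) * (1 - δw) := mul_nonneg hKs'.le (by linarith)
    have h2 : 0 < (Kw:ℝ) * a := mul_pos hKw' ha
    linarith
  have hM1' : M1 * ((Ks:ℝ) * (1 - δw) + Kw * a) = a * min (1 - δz) (1 - δw) := by
    rw [hM1]; exact div_mul_cancel₀ _ hD2.ne'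
  have hKsM : (Ks:ℝ) * M ≤ Kw * a := by
    have h1 : (Ks:ℝ) * M ≤ Ks * (Kw * M1) :=
      mul_le_mul_of_nonneg_left hMle hKs'.le
    have h2 : (Ks:ℝ) * (Kw * M1) ≤ Kw * a := by
      have key : (Ks:ℝ) * (Kw * M1) * (Ks * (1 - δw) + Kw * a)
          ≤ Kw * a * (Ks * (1 - δw) + Kw * a) := by
        have e : (Ks:ℝ) * Kw * (M1 * (Ks * (1 - δw) + Kw * a))
            = Ks * Kw * (a * min (1 - δz) (1 - δw)) := by rw [hM1']
        nlinarith [e, mul_nonneg (mul_nonneg hKw'.le ha.le) (mul_nonneg hKw'.le ha.le),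
          mul_nonneg (mul_nonneg (mul_nonneg hKw'.le hKs'.le) ha.le)
            (by linarith : (0:ℝ) ≤ (1 - δw) - min (1 - δz) (1 - δw))]
      exact le_of_mul_le_mul_right key hD2
    linarith
  set β : ℝ := ((Kw:ℝ) * a - Ks * M) / D with hβ_def
  have hβ0 : 0 ≤ β := div_nonneg (by linarith) hD.le
  have hβ1 : β ≤ 1 := by
    rw [hβ_def, div_le_one hD]
    have h1 : 0 ≤ (Ks:ℝ) * M := mul_nonneg hKs'.le hM0
    have h2 : 0 ≤ (Ks:ℝ) * x := mul_nonneg hKs'.le hx0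
    simp only [hD_def]; linarith
  set V : ℝ := R0 + a * M / D with hV_def
  have hval1 : (β * x + M) / Kw = V := by
    rw [hV_def, hR0, hβ_def]
    field_simp
    ring
  have hval2 : (β * x + (1 - β) * a + M) / K = V := by
    rw [hV_def, hR0, hβ_def, hKcast]
    have hKK : (0:ℝ) < (Kw:ℝ) + Ks := by linarith
    field_simp
    ring
  have hgreat : IsGreatest ((fun β : ℝ => min ((β * x + M) / Kw)
      ((β * x + (1 - β) * a + M) / K)) '' Set.Icc 0 1) V := by
    constructor
    · exact ⟨β, ⟨hβ0, hβ1⟩, by simp only [hval1, hval2, min_self]⟩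
    · rintro y ⟨b, ⟨hb0, hb1⟩, rfl⟩
      rcases le_total b β with hb | hb
      · refine le_trans (min_le_left _ _) ?_
        rw [← hval1]
        have hbx : b * x + M ≤ β * x + M := by
          have := mul_le_mul_of_nonneg_right hb hx0
          linarith
        exact (div_le_div_iff_of_pos_right hKw').mpr hbx
      · refine le_trans (min_le_right _ _) ?_
        rw [← hval2]
        have h2 : 0 ≤ (b - β) * (a - x) :=
          mul_nonneg (by linarith) (by linarith)
        have key : β * x + (1 - β) * a + M - (b * x + (1 - b) * a + M)
            = (b - β) * (a - x) := by ring
        have hbx : b * x + (1 - b) * a + M ≤ β * x + (1 - β) * a + M := by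
          linarith [h2, key]
        exact (div_le_div_iff_of_pos_right hK').mpr hbx
  calc sSup _ = V := hgreat.csSup_eq
    _ = R0 + (δz - δs) * M / (Kw * (δz - δs) + Ks * x) := by
        rw [hV_def, ha_def, hD_def]
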